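/- For any two elements R₁, R₂ of the even subalgebra Cl⁰(3), the element R₁·reverse(R₂) + R₂·reverse(R₁) is a scalar, i.e. it lies in the image of the algebra map ℝ → Cl(3). (Hence (R₁,R₂) := ½(R₁·reverse(R₂) + R₂·reverse(R₁)) defines a real-valued symmetric bilinear form on Cl⁰(3).) -/
import Mathlib


noncomputable section

/-- The positive definite quadratic form `Q(v) = v₁² + v₂² + v₃²` on `ℝ³`. -/
def Q3 : QuadraticForm ℝ (Fin 3 → ℝ) :=
  QuadraticMap.weightedSumSquares ℝ (fun _ : Fin 3 => (1 : ℝ))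

open CliffordAlgebra

def e (i : Fin 3) : CliffordAlgebra Q3 := ι Q3 (Pi.single i 1)

lemma e_sq (i : Fin 3) : e i * e i = 1 := by
  rw [e, ι_sq_scalar]
  have : Q3 (Pi.single i 1) = 1 := by
    simp [Q3, QuadraticMap.weightedSumSquares_apply, Pi.single_apply, Fin.sum_univ_three]
  rw [this, map_one]

lemma e_ortho {i j : Fin 3} (h : i ≠ j) : Q3.IsOrtho (Pi.single i (1:ℝ)) (Pi.single j 1) := by
  rw [QuadraticMap.isOrtho_def]
  simp [Q3, QuadraticMap.weightedSumSquares_apply, Pi.single_apply, Fin.sum_univ_three]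
  fin_cases i <;> fin_cases j <;> simp_all

lemma e_swap {i j : Fin 3} (h : i ≠ j) : e i * e j = -(e j * e i) :=
  ι_mul_ι_comm_of_isOrtho (e_ortho h)

/-- The span of `{1, e0e1, e0e2, e1e2}`. -/
def M3 : Submodule ℝ (CliffordAlgebra Q3) :=
  Submodule.span ℝ {1, e 0 * e 1, e 0 * e 2, e 1 * e 2}

lemma one_mem_M3 : (1 : CliffordAlgebra Q3) ∈ M3 :=
  Submodule.subset_span (by simp)
lemma E01_mem_M3 : e 0 * e 1 ∈ M3 := Submodule.subset_span (by simp)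
lemma E02_mem_M3 : e 0 * e 2 ∈ M3 := Submodule.subset_span (by simp)
lemma E12_mem_M3 : e 1 * e 2 ∈ M3 := Submodule.subset_span (by simp)

lemma E_mem_M3 (i j : Fin 3) : e i * e j ∈ M3 := by
  fin_cases i <;> fin_cases j
  · rw [e_sq]; exact one_mem_M3
  · exact E01_mem_M3
  · exact E02_mem_M3
  · rw [e_swap (by decide)]; exact M3.neg_mem E01_mem_M3
  · rw [e_sq]; exact one_mem_M3
  · exact E12_mem_M3
  · rw [e_swap (by decide)]; exact M3.neg_mem E02_mem_M3
  · rw [e_swap (by decide)]; exact M3.neg_mem E12_mem_M3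
  · rw [e_sq]; exact one_mem_M3

lemma e_cancel (i : Fin 3) (x : CliffordAlgebra Q3) : e i * (e i * x) = x := by
  rw [← mul_assoc, e_sq, one_mul]

lemma e_swap' {i j : Fin 3} (h : i ≠ j) (x : CliffordAlgebra Q3) :
    e i * (e j * x) = -(e j * (e i * x)) := by
  rw [← mul_assoc, e_swap h, neg_mul, mul_assoc]

lemma e10 (x) : e 1 * (e 0 * x) = -(e 0 * (e 1 * x)) := e_swap' (by decide) x
lemma e20 (x) : e 2 * (e 0 * x) = -(e 0 * (e 2 * x)) := e_swap' (by decide) x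
lemma e21 (x) : e 2 * (e 1 * x) = -(e 1 * (e 2 * x)) := e_swap' (by decide) x
lemma e10' : e 1 * e 0 = -(e 0 * e 1) := e_swap (by decide)
lemma e20' : e 2 * e 0 = -(e 0 * e 2) := e_swap (by decide)
lemma e21' : e 2 * e 1 = -(e 1 * e 2) := e_swap (by decide)

lemma fin3_mk0 (h) : (⟨0, h⟩ : Fin 3) = 0 := rfl
lemma fin3_mk1 (h) : (⟨1, h⟩ : Fin 3) = 1 := rfl
lemma fin3_mk2 (h) : (⟨2, h⟩ : Fin 3) = 2 := rfl

lemma E_mul_E_mem' (i j k l : Fin 3) : e i * e j * (e k * e l) ∈ M3 := by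
  fin_cases i <;> fin_cases j <;> fin_cases k <;> fin_cases l <;>
    simp only [fin3_mk0, fin3_mk1, fin3_mk2] <;>
    simp only [mul_assoc, e_cancel, e10, e20, e21, e_sq, e10', e20', e21',
      mul_neg, neg_neg, mul_one, one_mul, neg_mul] <;>
    first
      | exact one_mem_M3 | exact E01_mem_M3 | exact E02_mem_M3 | exact E12_mem_M3
      | exact M3.neg_mem one_mem_M3 | exact M3.neg_mem E01_mem_M3
      | exact M3.neg_mem E02_mem_M3 | exact M3.neg_mem E12_mem_M3

lemma mul_mem_M3 {x y : CliffordAlgebra Q3} (hx : x ∈ M3) (hy : y ∈ M3) : x * y ∈ M3 := by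
  induction hx using Submodule.span_induction with
  | mem a ha =>
    induction hy using Submodule.span_induction with
    | mem b hb =>
      simp only [Set.mem_insert_iff, Set.mem_singleton_iff] at ha hb
      rcases ha with rfl | rfl | rfl | rfl <;> rcases hb with rfl | rfl | rfl | rfl <;>
        first
          | exact E_mul_E_mem' _ _ _ _
          | (simp only [one_mul, mul_one]
             first
               | exact one_mem_M3 | exact E01_mem_M3
               | exact E02_mem_M3 | exact E12_mem_M3)
    | zero => simpa using M3.zero_mem
    | add b c _ _ ihb ihc => rw [mul_add]; exact M3.add_mem ihb ihc
    | smul r b _ ihb => rw [mul_smul_comm]; exact M3.smul_mem r ihb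
  | zero => simpa using M3.zero_mem
  | add a b _ _ iha ihb => rw [add_mul]; exact M3.add_mem iha ihb
  | smul r a _ iha => rw [smul_mul_assoc]; exact M3.smul_mem r iha

lemma ι_eq_sum (m : Fin 3 → ℝ) : ι Q3 m = ∑ i, m i • e i := by
  have hm : m = ∑ i, m i • (Pi.single i (1:ℝ) : Fin 3 → ℝ) := by
    ext j; simp [Pi.single_apply]
  conv_lhs => rw [hm]
  rw [map_sum]
  simp [e]

lemma even_mem_M3 {x : CliffordAlgebra Q3} (hx : x ∈ CliffordAlgebra.evenOdd Q3 0) :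
    x ∈ M3 := by
  induction x, hx using CliffordAlgebra.even_induction with
  | algebraMap r =>
    rw [Algebra.algebraMap_eq_smul_one]
    exact M3.smul_mem r one_mem_M3
  | add x y hx hy ihx ihy => exact M3.add_mem ihx ihy
  | ι_mul_ι_mul m₁ m₂ x hx ihx =>
    rw [ι_eq_sum m₁, ι_eq_sum m₂, Finset.sum_mul, Finset.sum_mul]
    refine Submodule.sum_mem _ fun i _ => ?_
    rw [Finset.mul_sum, Finset.sum_mul]
    refine Submodule.sum_mem _ fun j _ => ?_
    rw [smul_mul_assoc, mul_smul_comm, smul_mul_assoc, smul_mul_assoc]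
    exact M3.smul_mem _ (M3.smul_mem _ (mul_mem_M3 (E_mem_M3 i j) ihx))

lemma reverse_mem_M3 {x : CliffordAlgebra Q3} (hx : x ∈ M3) :
    CliffordAlgebra.reverse x ∈ M3 := by
  induction hx using Submodule.span_induction with
  | mem a ha =>
    simp only [Set.mem_insert_iff, Set.mem_singleton_iff] at ha
    rcases ha with rfl | rfl | rfl | rfl <;>
      simp only [CliffordAlgebra.reverse.map_one, CliffordAlgebra.reverse.map_mul, e, CliffordAlgebra.reverse_ι] <;>
      first | exact one_mem_M3 | exact E_mem_M3 _ _
  | zero => simpa using M3.zero_mem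
  | add a b _ _ iha ihb => rw [map_add]; exact M3.add_mem iha ihb
  | smul r a _ iha => rw [map_smul]; exact M3.smul_mem r iha

lemma add_reverse_scalar {z : CliffordAlgebra Q3} (hz : z ∈ M3) :
    ∃ a : ℝ, z + CliffordAlgebra.reverse z = algebraMap ℝ _ a := by
  induction hz using Submodule.span_induction with
  | mem a ha =>
    simp only [Set.mem_insert_iff, Set.mem_singleton_iff] at ha
    rcases ha with rfl | rfl | rfl | rfl
    · exact ⟨2, by rw [map_ofNat]; norm_num⟩
    · refine ⟨0, ?_⟩
      rw [CliffordAlgebra.reverse.map_mul, e, e, CliffordAlgebra.reverse_ι,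
        CliffordAlgebra.reverse_ι, ← e, ← e, e_swap (by decide : (1:Fin 3) ≠ 0)]
      simp
    · refine ⟨0, ?_⟩
      rw [CliffordAlgebra.reverse.map_mul, e, e, CliffordAlgebra.reverse_ι,
        CliffordAlgebra.reverse_ι, ← e, ← e, e_swap (by decide : (2:Fin 3) ≠ 0)]
      simp
    · refine ⟨0, ?_⟩
      rw [CliffordAlgebra.reverse.map_mul, e, e, CliffordAlgebra.reverse_ι,
        CliffordAlgebra.reverse_ι, ← e, ← e, e_swap (by decide : (2:Fin 3) ≠ 1)]
      simp
  | zero => exact ⟨0, by simp⟩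
  | add a b _ _ iha ihb =>
    obtain ⟨r, hr⟩ := iha; obtain ⟨s, hs⟩ := ihb
    refine ⟨r + s, ?_⟩
    rw [map_add, map_add]
    rw [show a + b + (CliffordAlgebra.reverse a + CliffordAlgebra.reverse b)
      = (a + CliffordAlgebra.reverse a) + (b + CliffordAlgebra.reverse b) by abel, hr, hs]
  | smul r a _ iha =>
    obtain ⟨s, hs⟩ := iha
    refine ⟨r * s, ?_⟩
    rw [map_smul, ← smul_add, hs, Algebra.smul_def, ← map_mul]

/-- For any two elements `R₁, R₂` of the even subalgebra `Cl⁰(3)`, the element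
`R₁ · reverse R₂ + R₂ · reverse R₁` is a scalar, i.e. lies in the image of `ℝ → Cl(3)`. -/
theorem even_mul_reverse_add_is_scalar (R₁ R₂ : CliffordAlgebra.even Q3) :
    ∃ c : ℝ,
      (R₁ : CliffordAlgebra Q3) * CliffordAlgebra.reverse (R₂ : CliffordAlgebra Q3) +
        (R₂ : CliffordAlgebra Q3) * CliffordAlgebra.reverse (R₁ : CliffordAlgebra Q3) =
      algebraMap ℝ (CliffordAlgebra Q3) c := by
  set x := (R₁ : CliffordAlgebra Q3)
  set y := (R₂ : CliffordAlgebra Q3)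
  have hx : x ∈ M3 := even_mem_M3 R₁.2
  have hy : y ∈ M3 := even_mem_M3 R₂.2
  set z := x * CliffordAlgebra.reverse y + y * CliffordAlgebra.reverse x with hzdef
  have hz : z ∈ M3 :=
    M3.add_mem (mul_mem_M3 hx (reverse_mem_M3 hy)) (mul_mem_M3 hy (reverse_mem_M3 hx))
  have hrev : CliffordAlgebra.reverse z = z := by
    rw [hzdef, map_add, CliffordAlgebra.reverse.map_mul, CliffordAlgebra.reverse.map_mul,
      CliffordAlgebra.reverse_reverse, CliffordAlgebra.reverse_reverse, add_comm]
  obtain ⟨a, ha⟩ := add_reverse_scalar hz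
  rw [hrev] at ha
  refine ⟨a / 2, ?_⟩
  have h2 : (2 : ℝ) • z = algebraMap ℝ (CliffordAlgebra Q3) a := by
    rw [two_smul]; exact ha
  have := congrArg (fun w => ((2:ℝ)⁻¹) • w) h2
  simp only [smul_smul, inv_mul_cancel₀ (two_ne_zero : (2:ℝ) ≠ 0), one_smul] at this
  rw [this, Algebra.smul_def, ← map_mul]
  norm_num [div_eq_inv_mul]
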